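/- There exist two disjoint subsets A, A' ⊆ ℝ, each of cardinality 𝔠, such that μ_*(A) = μ_*(A') = μ_*(ℝ \ A) = μ_*(ℝ \ A') = 0 and such that A ∪ A' is algebraically independent over ℚ. -/

import Mathlib

open MeasureTheory Cardinal

/-- The inner measure of `M ⊆ ℝ`: the supremum of the measures of Borel sets contained in `M`.
(The measurable sets of `ℝ` are exactly the Borel sets.) -/
noncomputable def innerMeasure (M : Set ℝ) : ENNReal :=
  ⨆ (B : Set ℝ) (_ : MeasurableSet B) (_ : B ⊆ M), volume B

namespace TwoSetsAux

open Set

lemma isAlgebraic_of_mem {S : Set ℝ} {a : ℝ} (h : a ∈ Algebra.adjoin ℚ S) :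
    IsAlgebraic (Algebra.adjoin ℚ S) a :=
  isAlgebraic_algebraMap (⟨a, h⟩ : Algebra.adjoin ℚ S)

lemma transcendental_not_mem {S : Set ℝ} {a : ℝ}
    (h : Transcendental (Algebra.adjoin ℚ S) a) : a ∉ S :=
  fun hm => h (isAlgebraic_of_mem (Algebra.subset_adjoin hm))

lemma algind_insert {s : Set ℝ} {a : ℝ}
    (h : AlgebraicIndependent ℚ ((↑) : s → ℝ))
    (ha : Transcendental (Algebra.adjoin ℚ s) a) :
    AlgebraicIndependent ℚ ((↑) : ↥(insert a s) → ℝ) := by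
  classical
  have ha' : a ∉ s := transcendental_not_mem ha
  have h2 : AlgebraicIndependent ℚ fun o : Option s => o.elim a Subtype.val :=
    (AlgebraicIndependent.option_iff (a := a)).2 ⟨h, by rwa [Subtype.range_val]⟩
  convert h2.comp _ (Set.subtypeInsertEquivOption ha').injective
  ext x
  by_cases hx : ↑x = a <;> simp [hx, Set.subtypeInsertEquivOption]

/-- The cardinality of the set of elements of `ℝ` algebraic over `Algebra.adjoin ℚ S` is
small when `S` is small. -/
lemma mk_algebraic_lt {S : Set ℝ} (hS : #S < 𝔠) :
    #{x : ℝ | IsAlgebraic (Algebra.adjoin ℚ S) x} < 𝔠 := by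
  haveI : NoZeroSMulDivisors (Algebra.adjoin ℚ S) ℝ :=
    ⟨fun {c x} h => by
      rw [Algebra.smul_def, mul_eq_zero] at h
      exact h.imp (fun h => Subtype.ext h) id⟩
  have h1 : #{x : ℝ // IsAlgebraic (Algebra.adjoin ℚ S) x} ≤
      max #(Algebra.adjoin ℚ S) ℵ₀ := Algebraic.cardinalMk_le_max _ _
  have h2 : #(Algebra.adjoin ℚ S) ≤ max (max #ℚ #S) ℵ₀ := Algebra.cardinalMk_adjoin_le ℚ S
  have h3 : max (max #ℚ #S) ℵ₀ < 𝔠 := by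
    apply max_lt (max_lt _ hS) aleph0_lt_continuum
    exact (mk_le_aleph0).trans_lt aleph0_lt_continuum
  exact h1.trans_lt (max_lt (h2.trans_lt h3) aleph0_lt_continuum)

/-- Key step: any positive-measure measurable set contains a point transcendental over
`Algebra.adjoin ℚ S` when `#S < 𝔠`. -/
lemma exists_trans_mem {S B : Set ℝ} (hS : #S < 𝔠) (hB : MeasurableSet B)
    (hB0 : volume B ≠ 0) : ∃ x, x ∈ B ∧ Transcendental (Algebra.adjoin ℚ S) x := by
  obtain ⟨K, hKB, hKc, hK0⟩ :=
    (MeasureTheory.Measure.InnerRegular.innerRegular (μ := (volume : Measure ℝ))) hB 0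
      (pos_iff_ne_zero.2 hB0)
  have hKunc : ¬ K.Countable := fun hc => by
    simp [hc.measure_zero (volume : Measure ℝ)] at hK0
  obtain ⟨f, hfK, -, hfinj⟩ := hKc.isClosed.exists_nat_bool_injection_of_not_countable hKunc
  have hcK : 𝔠 ≤ #K := by
    have h1 : #(range f) ≤ #K := mk_le_mk_of_subset hfK
    rw [mk_range_eq f hfinj] at h1
    refine le_trans ?_ h1
    rw [← Cardinal.power_def, mk_fintype, mk_denumerable]
    simp [Cardinal.two_power_aleph0]
  by_contra hno
  push_neg at hno
  have hsub : K ⊆ {x : ℝ | IsAlgebraic (Algebra.adjoin ℚ S) x} := by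
    intro x hxK
    by_contra hxa
    exact hxa (not_not.1 fun h => (hno x (hKB hxK)) h)
  exact absurd ((hcK.trans (mk_le_mk_of_subset hsub)).trans_lt (mk_algebraic_lt hS))
    (lt_irrefl _)

/-- The type of positive-measure measurable subsets of `ℝ`. -/
abbrev Ω : Type := {B : Set ℝ // MeasurableSet B ∧ volume B ≠ 0}

instance : Nonempty Ω :=
  ⟨⟨Set.Icc 0 1, measurableSet_Icc, by simp [Real.volume_Icc]⟩⟩

lemma mk_Omega_le : #Ω ≤ 𝔠 := by
  have h0 : (inferInstance : MeasurableSpace ℝ) =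
      MeasurableSpace.generateFrom (Set.range Set.Iio) := by
    rw [BorelSpace.measurable_eq (α := ℝ), borel_eq_generateFrom_Iio]
  have h1 : #{t : Set ℝ | @MeasurableSet ℝ (.generateFrom (Set.range Set.Iio)) t} ≤ 𝔠 :=
    MeasurableSpace.cardinal_measurableSet_le_continuum
      (mk_range_le.trans (le_of_eq Cardinal.mk_real))
  refine le_trans (mk_le_of_injective
    (f := fun B : Ω => (⟨B.1, h0 ▸ B.2.1⟩ :
      {t : Set ℝ | @MeasurableSet ℝ (.generateFrom (Set.range Set.Iio)) t})) ?_) h1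
  intro B1 B2 h
  exact Subtype.ext (by simpa using congrArg Subtype.val h)

/-- Index type: the ordinal `𝔠.ord`, as a well-ordered type of cardinality `𝔠`
all of whose initial segments are small. -/
abbrev I : Type := (Cardinal.continuum).ord.ToType

instance : Nonempty I :=
  Ordinal.toType_nonempty_iff_ne_zero.2 (by
    simp [Cardinal.ord_eq_zero, continuum_ne_zero])

lemma mk_I : #I = 𝔠 := by
  rw [Cardinal.mk_toType, Cardinal.card_ord]

noncomputable def pick (S B : Set ℝ) : ℝ :=
  letI := Classical.propDecidable (∃ x, x ∈ B ∧ Transcendental (Algebra.adjoin ℚ S) x)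
  if h : ∃ x, x ∈ B ∧ Transcendental (Algebra.adjoin ℚ S) x then h.choose else 0

lemma pick_spec {S B : Set ℝ} (hS : #S < 𝔠) (hB : MeasurableSet B) (hB0 : volume B ≠ 0) :
    pick S B ∈ B ∧ Transcendental (Algebra.adjoin ℚ S) (pick S B) := by
  have h := exists_trans_mem hS hB hB0
  unfold pick
  rw [dif_pos h]
  exact ⟨h.choose_spec.1, h.choose_spec.2⟩

variable (E : I → Ω)

/-- The transfinite recursion: at stage `i` pick two elements of `(E i).1` transcendental
over everything chosen before. -/
noncomputable def g : I → ℝ × ℝ :=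
  (IsWellFounded.wf (α := I) (r := (· < ·))).fix fun i g' =>
    let S : Set ℝ := ⋃ j : Set.Iio i, {(g' j j.2).1, (g' j j.2).2}
    let a := pick S (E i).1
    (a, pick (insert a S) (E i).1)

/-- The set of all coordinates chosen before stage `i`. -/
def T (i : I) : Set ℝ := ⋃ j : Set.Iio i, {(g E j).1, (g E j).2}

lemma g_eq (i : I) : g E i =
    (pick (T E i) (E i).1,
     pick (insert (pick (T E i) (E i).1) (T E i)) (E i).1) := by
  show WellFounded.fix _ _ i = _
  rw [WellFounded.fix_eq]
  rfl

lemma mk_T_lt (i : I) : #(T E i) < 𝔠 := by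
  have h1 : #(T E i) ≤ #(Set.Iio i) * ℵ₀ := by
    refine (Cardinal.mk_iUnion_le _).trans ?_
    refine mul_le_mul' le_rfl (ciSup_le' fun j => ?_)
    exact ((Set.finite_singleton _).insert _).countable.le_aleph0
  refine h1.trans_lt (Cardinal.mul_lt_of_lt aleph0_le_continuum
    (Cardinal.mk_Iio_ord_toType i) aleph0_lt_continuum)

lemma a_spec (i : I) : (g E i).1 ∈ (E i).1 ∧
    Transcendental (Algebra.adjoin ℚ (T E i)) (g E i).1 := by
  rw [g_eq E i]
  exact pick_spec (mk_T_lt E i) (E i).2.1 (E i).2.2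

lemma b_spec (i : I) : (g E i).2 ∈ (E i).1 ∧
    Transcendental (Algebra.adjoin ℚ (insert (g E i).1 (T E i))) (g E i).2 := by
  rw [g_eq E i]
  refine pick_spec ?_ (E i).2.1 (E i).2.2
  refine (Cardinal.mk_insert_le).trans_lt
    (Cardinal.add_lt_of_lt aleph0_le_continuum (mk_T_lt E i) (one_lt_aleph0.trans
      aleph0_lt_continuum))

lemma pair_subset_T {i j : I} (h : i < j) :
    ({(g E i).1, (g E i).2} : Set ℝ) ⊆ T E j := fun x hx =>
  Set.mem_iUnion.2 ⟨⟨i, h⟩, hx⟩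

lemma a_mem_T {i j : I} (h : i < j) : (g E i).1 ∈ T E j :=
  pair_subset_T E h (Set.mem_insert _ _)

lemma b_mem_T {i j : I} (h : i < j) : (g E i).2 ∈ T E j :=
  pair_subset_T E h (Set.mem_insert_of_mem _ rfl)

lemma T_mono {i j : I} (h : i ≤ j) : T E i ⊆ T E j := by
  intro x hx
  obtain ⟨⟨k, hk⟩, hxk⟩ := Set.mem_iUnion.1 hx
  exact Set.mem_iUnion.2 ⟨⟨k, hk.trans_le h⟩, hxk⟩

/-- All elements chosen up to and including stage `i`. -/
def U (i : I) : Set ℝ := insert (g E i).2 (insert (g E i).1 (T E i))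

lemma U_subset_T {i j : I} (h : i < j) : U E i ⊆ T E j := by
  intro x hx
  rcases hx with rfl | rfl | hx
  · exact b_mem_T E h
  · exact a_mem_T E h
  · exact T_mono E h.le hx

lemma U_mono {i j : I} (h : i ≤ j) : U E i ⊆ U E j := by
  rcases eq_or_lt_of_le h with rfl | h
  · exact le_rfl
  · exact (U_subset_T E h).trans
      ((Set.subset_insert _ _).trans (Set.subset_insert _ _))

lemma algind_U (i : I) : AlgebraicIndependent ℚ ((↑) : (U E i) → ℝ) := by
  induction i using ((IsWellFounded.wf (α := I) (r := (· < ·)))).induction with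
  | _ i IH =>
    have hT : AlgebraicIndependent ℚ ((↑) : (T E i) → ℝ) := by
      rcases isEmpty_or_nonempty (Set.Iio i) with he | hne
      · have : T E i = (∅ : Set ℝ) := by
          rw [T, Set.iUnion_of_empty]
        rw [this]
        exact algebraicIndependent_empty
      · have hTeq : T E i = ⋃ j : Set.Iio i, U E j := by
          apply Set.Subset.antisymm
          · intro x hx
            obtain ⟨⟨k, hk⟩, hxk⟩ := Set.mem_iUnion.1 hx
            refine Set.mem_iUnion.2 ⟨⟨k, hk⟩, ?_⟩
            rcases hxk with rfl | hxk
            · exact Set.mem_insert_of_mem _ (Set.mem_insert _ _)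
            · rcases hxk with rfl
              exact Set.mem_insert _ _
          · exact Set.iUnion_subset fun j => U_subset_T E j.2
        rw [hTeq]
        refine algebraicIndependent_iUnion_of_directed ?_ fun j => IH j j.2
        intro j k
        rcases le_total (j : I) k with h | h
        · exact ⟨k, U_mono E h, le_rfl⟩
        · exact ⟨j, le_rfl, U_mono E h⟩
    have hA : AlgebraicIndependent ℚ ((↑) : (insert (g E i).1 (T E i) : Set ℝ) → ℝ) :=
      algind_insert hT (a_spec E i).2
    exact algind_insert hA (b_spec E i).2

lemma a_not_mem_T (i : I) : (g E i).1 ∉ T E i :=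
  transcendental_not_mem (a_spec E i).2

lemma b_not_mem (i : I) : (g E i).2 ∉ insert (g E i).1 (T E i) :=
  transcendental_not_mem (b_spec E i).2

lemma a_ne_b (i j : I) : (g E i).1 ≠ (g E j).2 := by
  rcases lt_trichotomy i j with h | rfl | h
  · intro he
    exact b_not_mem E j (he ▸ Set.mem_insert_of_mem _ (a_mem_T E h))
  · intro he
    exact b_not_mem E i (he ▸ Set.mem_insert _ _)
  · intro he
    exact a_not_mem_T E i (he ▸ b_mem_T E h)

lemma a_injective : Function.Injective fun i => (g E i).1 := by
  intro i j h
  replace h : (g E i).1 = (g E j).1 := h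
  by_contra hne
  rcases lt_or_gt_of_ne hne with hlt | hlt
  · exact a_not_mem_T E j (h ▸ a_mem_T E hlt)
  · exact a_not_mem_T E i (h.symm ▸ a_mem_T E hlt)

lemma b_injective : Function.Injective fun i => (g E i).2 := by
  intro i j h
  replace h : (g E i).2 = (g E j).2 := h
  by_contra hne
  rcases lt_or_gt_of_ne hne with hlt | hlt
  · exact b_not_mem E j (h ▸ Set.mem_insert_of_mem _ (b_mem_T E hlt))
  · exact b_not_mem E i (h.symm ▸ Set.mem_insert_of_mem _ (b_mem_T E hlt))

lemma innerMeasure_eq_zero {M : Set ℝ}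
    (h : ∀ B : Set ℝ, MeasurableSet B → B ⊆ M → volume B = 0) : innerMeasure M = 0 := by
  rw [innerMeasure]
  simp only [ENNReal.iSup_eq_zero]
  exact h

end TwoSetsAux

open TwoSetsAux in
/-- There exist disjoint sets `A, A' ⊆ ℝ`, each of cardinality `𝔠`, with
`μ_*(A) = μ_*(A') = μ_*(ℝ \ A) = μ_*(ℝ \ A') = 0`, whose union `A ∪ A'` is algebraically
independent over `ℚ`. -/
theorem exists_two_disjoint_nonmeasurable_algIndependent_sets :
    ∃ A A' : Set ℝ, Disjoint A A' ∧ #A = Cardinal.continuum ∧ #A' = Cardinal.continuum ∧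
      innerMeasure A = 0 ∧ innerMeasure A' = 0 ∧
      innerMeasure Aᶜ = 0 ∧ innerMeasure A'ᶜ = 0 ∧
      AlgebraicIndependent ℚ ((↑) : (A ∪ A' : Set ℝ) → ℝ) := by
  classical
  -- a surjection `E : I → Ω`
  obtain ⟨emb⟩ := Cardinal.le_def Ω I |>.1 (mk_Omega_le.trans mk_I.ge)
  set E : I → Ω := Function.invFun emb with hEdef
  have hE : Function.Surjective E := Function.invFun_surjective emb.injective
  set A : Set ℝ := Set.range fun i => (g E i).1 with hA
  set A' : Set ℝ := Set.range fun i => (g E i).2 with hA'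
  have hdisj : Disjoint A A' := by
    rw [Set.disjoint_left]
    rintro x ⟨i, rfl⟩ ⟨j, hj⟩
    exact a_ne_b E i j hj.symm
  -- every positive-measure measurable set meets both A and A'
  have hmeet : ∀ B : Set ℝ, MeasurableSet B → volume B ≠ 0 →
      (∃ x ∈ A, x ∈ B) ∧ ∃ x ∈ A', x ∈ B := by
    intro B hB hB0
    obtain ⟨i, hi⟩ := hE ⟨B, hB, hB0⟩
    refine ⟨⟨(g E i).1, ⟨i, rfl⟩, ?_⟩, ⟨(g E i).2, ⟨i, rfl⟩, ?_⟩⟩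
    · have := (a_spec E i).1; rwa [hi] at this
    · have := (b_spec E i).1; rwa [hi] at this
  refine ⟨A, A', hdisj, ?_, ?_, ?_, ?_, ?_, ?_, ?_⟩
  · -- #A = 𝔠
    refine le_antisymm ((Cardinal.mk_set_le A).trans_eq Cardinal.mk_real) ?_
    rw [hA, Cardinal.mk_range_eq _ (a_injective E), mk_I]
  · refine le_antisymm ((Cardinal.mk_set_le A').trans_eq Cardinal.mk_real) ?_
    rw [hA', Cardinal.mk_range_eq _ (b_injective E), mk_I]
  · -- innerMeasure A = 0
    refine innerMeasure_eq_zero fun B hB hBA => ?_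
    by_contra hB0
    obtain ⟨-, x, hxA', hxB⟩ := hmeet B hB hB0
    exact Set.disjoint_left.1 hdisj (hBA hxB) hxA'
  · refine innerMeasure_eq_zero fun B hB hBA' => ?_
    by_contra hB0
    obtain ⟨⟨x, hxA, hxB⟩, -⟩ := hmeet B hB hB0
    exact Set.disjoint_left.1 hdisj hxA (hBA' hxB)
  · -- innerMeasure Aᶜ = 0
    refine innerMeasure_eq_zero fun B hB hBAc => ?_
    by_contra hB0
    obtain ⟨⟨x, hxA, hxB⟩, -⟩ := hmeet B hB hB0
    exact hBAc hxB hxA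
  · refine innerMeasure_eq_zero fun B hB hBAc => ?_
    by_contra hB0
    obtain ⟨-, x, hxA', hxB⟩ := hmeet B hB hB0
    exact hBAc hxB hxA'
  · -- algebraic independence
    have hUnion : A ∪ A' ⊆ ⋃ i, U E i := by
      rintro x (⟨i, rfl⟩ | ⟨i, rfl⟩)
      · exact Set.mem_iUnion.2 ⟨i, Set.mem_insert_of_mem _ (Set.mem_insert _ _)⟩
      · exact Set.mem_iUnion.2 ⟨i, Set.mem_insert _ _⟩
    have halg : AlgebraicIndependent ℚ ((↑) : (⋃ i, U E i : Set ℝ) → ℝ) := by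
      refine algebraicIndependent_iUnion_of_directed ?_ (algind_U E)
      intro i j
      rcases le_total i j with h | h
      · exact ⟨j, U_mono E h, le_rfl⟩
      · exact ⟨i, le_rfl, U_mono E h⟩
    exact halg.mono hUnion
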